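/- For 1 < k < n−1 and 1 ≤ m ≤ n−1, the inequality e_{k,n,m} > e_{k−1,n−1,m} holds, where e_{k,n,m} = (1/(n−1)!) Σ_{ℓ=0}^{k−1} W(ℓ,n,m+1) A(m,k−ℓ−1). -/

import Mathlib

noncomputable section

open Finset

/-- The weight of a linearly ordered block (given as a list): the number of its
elements smaller than its first element. -/
def blockWeight (b : List ℕ) : ℕ := (b.filter (fun x => x < b.headI)).length

/-- `P` is a partition of `{1,…,n}` into linearly ordered blocks (nonempty lists
of distinct elements, pairwise disjoint, whose union is `{1,…,n}`). -/
def IsOrderedPartition (n : ℕ) (P : Finset (List ℕ)) : Prop :=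
  (∀ b ∈ P, b ≠ [] ∧ b.Nodup) ∧
  (∀ b₁ ∈ P, ∀ b₂ ∈ P, b₁ ≠ b₂ → ∀ x, x ∈ b₁ → x ∉ b₂) ∧
  (∀ x : ℕ, (∃ b ∈ P, x ∈ b) ↔ x ∈ Finset.Icc 1 n)

/-- The weight of an ordered partition: the sum of the weights of its blocks. -/
def partitionWeight (P : Finset (List ℕ)) : ℕ := ∑ b ∈ P, blockWeight b

/-- The weighted Lah number `W(ℓ,n,m)`: the number of partitions of `{1,…,n}`
into exactly `m` linearly ordered blocks with total weight `ℓ`.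
(It vanishes for `ℓ < 0`.) -/
def weightedLah (ℓ : ℤ) (n m : ℕ) : ℕ :=
  Set.ncard {P : Finset (List ℕ) |
    IsOrderedPartition n P ∧ P.card = m ∧ (partitionWeight P : ℤ) = ℓ}

/-- The number of cycles of a permutation of `Fin n` (fixed points count as cycles). -/
def numCycles {n : ℕ} (σ : Equiv.Perm (Fin n)) : ℕ :=
  Multiset.card σ.cycleType + (n - σ.cycleType.sum)

/-- The unsigned Stirling number of the first kind: the number of permutations of
`n` elements with exactly `m` cycles. -/
def stirlingFirst (n m : ℕ) : ℕ :=
  Nat.card {σ : Equiv.Perm (Fin n) // numCycles σ = m}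

/-- The number of descents of a permutation of `Fin m`. -/
def descentCount (m : ℕ) (σ : Equiv.Perm (Fin m)) : ℕ :=
  ((Finset.range (m - 1)).filter (fun i =>
    ((List.ofFn (fun j => (σ j : ℕ))).getD (i + 1) 0) <
      ((List.ofFn (fun j => (σ j : ℕ))).getD i 0))).card

/-- The Eulerian number `A(m,j)`: permutations of `{1,…,m}` with exactly `j` descents. -/
def eulerian (m j : ℕ) : ℕ :=
  Nat.card {σ : Equiv.Perm (Fin m) // descentCount m σ = j}

/-- The coefficient `e_{k,n,m}` of the Ehrhart polynomial of the hypersimplex. -/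
def eCoef (k n m : ℕ) : ℚ :=
  (1 / (n - 1).factorial : ℚ) *
    ∑ ℓ ∈ Finset.range k, (weightedLah ℓ n (m + 1) : ℚ) * (eulerian m (k - ℓ - 1) : ℚ)

/-- Number of lattice points of the `t`-th dilate of the hypersimplex `Δ_{k,n}`,
i.e. points of `{0,…,t}^n` with coordinate sum `k·t`. -/
def hyperCount (k n t : ℕ) : ℕ :=
  Nat.card {x : Fin n → ℤ // (∀ i, 0 ≤ x i ∧ x i ≤ (t : ℤ)) ∧ ∑ i, x i = (k : ℤ) * t}

/-- Number of lattice points of the `t`-th dilate of the half-open hypersimplex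
`Δ'_{k,n} ⊆ ℝ^{n-1}` (for `k > 1`). -/
def halfOpenCount (k n t : ℕ) : ℕ :=
  Nat.card {x : Fin (n - 1) → ℤ // (∀ i, 0 ≤ x i ∧ x i ≤ (t : ℤ)) ∧
    ((k : ℤ) - 1) * t < ∑ i, x i ∧ ∑ i, x i ≤ (k : ℤ) * t}

/-- Number of lattice points of the `t`-th dilate of the independence polytope of
`U_{k,n}`, i.e. points of `{0,…,t}^n` with coordinate sum at most `k·t`. -/
def indepCount (k n t : ℕ) : ℕ :=
  Nat.card {x : Fin n → ℤ // (∀ i, 0 ≤ x i ∧ x i ≤ (t : ℤ)) ∧ ∑ i, x i ≤ (k : ℤ) * t}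

/-- Number of lattice points of a region `S ⊆ ℝ^d`. -/
def latticeCount {d : ℕ} (S : Set (Fin d → ℝ)) : ℕ :=
  Nat.card {x : Fin d → ℤ // (fun i => (x i : ℝ)) ∈ S}


def shiftIns (i : ℕ) (b : List ℕ) : List ℕ :=
  b.flatMap (fun x => if x = i then [i+1, 1] else [x+1])

lemma shiftIns_nil (i : ℕ) : shiftIns i [] = [] := rfl

lemma shiftIns_cons (i x : ℕ) (t : List ℕ) :
    shiftIns i (x :: t) = (if x = i then [i+1, 1] else [x+1]) ++ shiftIns i t := by
  simp [shiftIns]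

lemma shiftIns_of_not_mem {i : ℕ} {b : List ℕ} (h : i ∉ b) :
    shiftIns i b = b.map (· + 1) := by
  induction b with
  | nil => rfl
  | cons x t ih =>
    simp only [List.mem_cons, not_or] at h
    rw [shiftIns_cons, if_neg (fun hh => h.1 hh.symm), ih h.2]
    rfl

lemma mem_shiftIns {i y : ℕ} {b : List ℕ} :
    y ∈ shiftIns i b ↔ (y = 1 ∧ i ∈ b) ∨ ∃ x ∈ b, y = x + 1 := by
  simp only [shiftIns, List.mem_flatMap]
  constructor
  · rintro ⟨x, hx, hy⟩
    by_cases h : x = i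
    · subst h
      rw [if_pos rfl] at hy
      rcases List.mem_cons.mp hy with rfl | hy
      · exact Or.inr ⟨x, hx, rfl⟩
      · simp only [List.mem_singleton] at hy
        exact Or.inl ⟨hy, hx⟩
    · rw [if_neg h] at hy
      simp only [List.mem_singleton] at hy
      exact Or.inr ⟨x, hx, hy⟩
  · rintro (⟨rfl, hi⟩ | ⟨x, hx, rfl⟩)
    · exact ⟨i, hi, by simp⟩
    · exact ⟨x, hx, by split <;> simp_all⟩

lemma shiftIns_ne_nil {i : ℕ} {b : List ℕ} (hb : b ≠ []) : shiftIns i b ≠ [] := by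
  cases b with
  | nil => exact absurd rfl hb
  | cons x t =>
    rw [shiftIns_cons]
    split <;> simp

lemma headI_shiftIns {i : ℕ} {b : List ℕ} (hb : b ≠ []) :
    (shiftIns i b).headI = b.headI + 1 := by
  cases b with
  | nil => exact absurd rfl hb
  | cons x t =>
    rw [shiftIns_cons]
    split
    · next h => simp [h]
    · simp

lemma nodup_shiftIns {i : ℕ} {b : List ℕ} (hnd : b.Nodup) (h1 : ∀ x ∈ b, 1 ≤ x)
    (hi : 1 ≤ i) : (shiftIns i b).Nodup := by
  induction b with
  | nil => simp [shiftIns]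
  | cons x t ih =>
    rw [shiftIns_cons]
    rw [List.nodup_cons] at hnd
    have h1t : ∀ y ∈ t, 1 ≤ y := fun y hy => h1 y (List.mem_cons_of_mem _ hy)
    have hnotmem : ∀ y ∈ (if x = i then [i+1, 1] else [x+1]), y ∉ shiftIns i t := by
      intro y hy hmem
      rcases mem_shiftIns.mp hmem with ⟨rfl, hit⟩ | ⟨z, hz, rfl⟩
      · -- y = 1 and i ∈ t
        split at hy
        · next h => subst h; exact hnd.1 hit
        · simp only [List.mem_singleton] at hy
          have := h1 x (List.mem_cons_self)
          omega
      · split at hy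
        · next h =>
          subst h
          rcases List.mem_cons.mp hy with h | h
          · have : z = x := by omega
            subst this; exact hnd.1 hz
          · simp only [List.mem_singleton] at h
            have := h1t z hz
            omega
        · simp only [List.mem_singleton] at hy
          have : z = x := by omega
          subst this; exact hnd.1 hz
    refine List.Nodup.append ?_ (ih hnd.2 h1t) ?_
    · split
      · simp; omega
      · simp
    · intro a ha hb2
      exact hnotmem a ha hb2

lemma erase_shiftIns {i : ℕ} {b : List ℕ} (hnd : b.Nodup) (h1 : ∀ x ∈ b, 1 ≤ x) :
    (shiftIns i b).erase 1 = b.map (· + 1) := by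
  induction b with
  | nil => rfl
  | cons x t ih =>
    have h1t : ∀ y ∈ t, 1 ≤ y := fun y hy => h1 y (List.mem_cons_of_mem _ hy)
    rw [List.nodup_cons] at hnd
    have hx1 : 1 ≤ x := h1 x (List.mem_cons_self)
    rw [shiftIns_cons]
    split
    · next h =>
      subst h
      simp only [List.cons_append, List.singleton_append]
      rw [List.erase_cons_tail (by simp; omega), List.erase_cons_head,
        shiftIns_of_not_mem hnd.1]
      rfl
    · next h =>
      simp only [List.singleton_append]
      rw [List.erase_cons_tail (by simp; omega), ih hnd.2 h1t]
      rfl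

lemma recover_shiftIns {i : ℕ} {b : List ℕ} (hnd : b.Nodup) (h1 : ∀ x ∈ b, 1 ≤ x) :
    ((shiftIns i b).erase 1).map (· - 1) = b := by
  rw [erase_shiftIns hnd h1, List.map_map]
  have : ((fun x => x - 1) ∘ fun x => x + 1 : ℕ → ℕ) = id := by
    funext x; simp
  rw [this, List.map_id]

lemma countLt_shiftIns {i h : ℕ} {b : List ℕ} (hnd : b.Nodup) (hh : 1 ≤ h) :
    ((shiftIns i b).filter (fun x => x < h + 1)).length
      = (b.filter (fun x => x < h)).length + (if i ∈ b then 1 else 0) := by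
  induction b with
  | nil => simp [shiftIns]
  | cons x t ih =>
    rw [List.nodup_cons] at hnd
    rw [shiftIns_cons, List.filter_append, List.length_append, ih hnd.2]
    by_cases hx : x = i
    · subst hx
      rw [if_pos rfl, if_pos (List.mem_cons_self), if_neg hnd.1]
      by_cases hlt : x < h
      · rw [show (List.filter (fun y => decide (y < h + 1)) [x+1, 1]).length = 2 by
          simp [List.filter_cons, hlt, show 0 < h by omega, hh]]
        rw [show (List.filter (fun y => decide (y < h)) (x :: t)).length
            = (List.filter (fun y => decide (y < h)) t).length + 1 by
          simp [List.filter_cons, hlt]]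
        omega
      · rw [show (List.filter (fun y => decide (y < h + 1)) [x+1, 1]).length = 1 by
          simp [List.filter_cons, hlt, show 0 < h by omega, hh]]
        rw [show (List.filter (fun y => decide (y < h)) (x :: t)).length
            = (List.filter (fun y => decide (y < h)) t).length by
          simp [List.filter_cons, hlt]]
        omega
    · rw [if_neg hx]
      have hmem : (i ∈ x :: t) ↔ (i ∈ t) :=
        ⟨fun hq => (List.mem_cons.mp hq).resolve_left (fun hq2 => hx hq2.symm),
          List.mem_cons_of_mem _⟩
      rw [if_congr hmem rfl rfl]
      by_cases hlt : x < h
      · rw [show (List.filter (fun y => decide (y < h + 1)) [x+1]).length = 1 by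
          simp [List.filter_cons, hlt]]
        rw [show (List.filter (fun y => decide (y < h)) (x :: t)).length
            = (List.filter (fun y => decide (y < h)) t).length + 1 by
          simp [List.filter_cons, hlt]]
        omega
      · rw [show (List.filter (fun y => decide (y < h + 1)) [x+1]).length = 0 by
          simp [List.filter_cons, hlt]]
        rw [show (List.filter (fun y => decide (y < h)) (x :: t)).length
            = (List.filter (fun y => decide (y < h)) t).length by
          simp [List.filter_cons, hlt]]
        omega

lemma blockWeight_shiftIns {i : ℕ} {b : List ℕ} (hb : b ≠ []) (hnd : b.Nodup)
    (h1 : ∀ x ∈ b, 1 ≤ x) :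
    blockWeight (shiftIns i b) = blockWeight b + (if i ∈ b then 1 else 0) := by
  have hh : 1 ≤ b.headI := h1 _ (by cases b with
    | nil => exact absurd rfl hb
    | cons x t => exact List.mem_cons_self)
  unfold blockWeight
  rw [headI_shiftIns hb]
  exact countLt_shiftIns hnd hh

lemma shiftIns_inj_left {i i' : ℕ} {b : List ℕ} (hnd : b.Nodup)
    (h1 : ∀ x ∈ b, 1 ≤ x) (hi : i ∈ b) (hi' : i' ∈ b)
    (heq : shiftIns i b = shiftIns i' b) : i = i' := by
  induction b with
  | nil => simp at hi
  | cons x t ih =>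
    rw [List.nodup_cons] at hnd
    have h1t : ∀ y ∈ t, 1 ≤ y := fun y hy => h1 y (List.mem_cons_of_mem _ hy)
    rw [shiftIns_cons, shiftIns_cons] at heq
    by_cases hx : x = i <;> by_cases hx' : x = i'
    · omega
    · exfalso
      rw [if_pos hx, if_neg hx'] at heq
      subst hx
      rw [shiftIns_of_not_mem hnd.1] at heq
      have hi't : i' ∈ t :=
        (List.mem_cons.mp hi').resolve_left (fun hq => hx' hq.symm)
      have ht : t ≠ [] := by rintro rfl; simp at hi't
      simp only [List.cons_append, List.singleton_append, List.nil_append, List.cons.injEq] at heq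
      have hhead : (shiftIns i' t).headI = t.headI + 1 := headI_shiftIns ht
      rw [← heq.2] at hhead
      have h1h : 1 ≤ t.headI := by
        cases t with
        | nil => exact absurd rfl ht
        | cons z t' => exact h1t z (List.mem_cons_self)
      simp at hhead
      omega
    · exfalso
      rw [if_neg hx, if_pos hx'] at heq
      subst hx'
      rw [shiftIns_of_not_mem hnd.1] at heq
      have hit : i ∈ t :=
        (List.mem_cons.mp hi).resolve_left (fun hq => hx hq.symm)
      have ht : t ≠ [] := by rintro rfl; simp at hit
      simp only [List.cons_append, List.singleton_append, List.nil_append, List.cons.injEq] at heq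
      have hhead : (shiftIns i t).headI = t.headI + 1 := headI_shiftIns ht
      rw [heq.2] at hhead
      have h1h : 1 ≤ t.headI := by
        cases t with
        | nil => exact absurd rfl ht
        | cons z t' => exact h1t z (List.mem_cons_self)
      simp at hhead
      omega
    · rw [if_neg hx, if_neg hx'] at heq
      simp only [List.singleton_append, List.cons.injEq] at heq
      have hit : i ∈ t :=
        (List.mem_cons.mp hi).resolve_left (fun hq => hx hq.symm)
      have hi't : i' ∈ t :=
        (List.mem_cons.mp hi').resolve_left (fun hq => hx' hq.symm)
      exact ih hnd.2 h1t hit hi't heq.2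

def lahSet (ℓ : ℤ) (n m : ℕ) : Set (Finset (List ℕ)) :=
  {P : Finset (List ℕ) |
    IsOrderedPartition n P ∧ P.card = m ∧ (partitionWeight P : ℤ) = ℓ}

lemma lahSet_finite (ℓ : ℤ) (n m : ℕ) : (lahSet ℓ n m).Finite := by
  classical
  set l := (Finset.Icc 1 n).toList with hl
  have hlnd : l.Nodup := Finset.nodup_toList _
  set L₀ : Finset (List ℕ) := (l.permutations.flatMap List.sublists).toFinset with hL₀
  apply Set.Finite.subset (L₀.powerset : Finset (Finset (List ℕ))).finite_toSet
  intro P hP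
  rw [Finset.mem_coe, Finset.mem_powerset]
  intro b hb
  obtain ⟨hop, _, _⟩ := hP
  have hbnd : b.Nodup := (hop.1 b hb).2
  have hbmem : ∀ x ∈ b, x ∈ l := by
    intro x hx
    rw [Finset.mem_toList]
    exact (hop.2.2 x).mp ⟨b, hb, hx⟩
  rw [hL₀, List.mem_toFinset, List.mem_flatMap]
  refine ⟨b ++ l.filter (fun y => ! decide (y ∈ b)), ?_, List.mem_sublists.mpr (List.sublist_append_left _ _)⟩
  rw [List.mem_permutations]
  have h1 : b.Perm (l.filter (fun y => y ∈ b)) := by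
    apply List.perm_of_nodup_nodup_toFinset_eq hbnd (hlnd.filter _)
    ext y
    simp only [List.mem_toFinset, List.mem_filter, decide_eq_true_eq]
    exact ⟨fun hy => ⟨hbmem y hy, hy⟩, fun hy => hy.2⟩
  exact (h1.append_right _).trans (List.filter_append_perm _ l)

section KeyMap

variable {n m : ℕ} {ℓ : ℕ}

lemma part_mem_facts {N : ℕ} {P : Finset (List ℕ)} (hP : IsOrderedPartition N P)
    {b : List ℕ} (hb : b ∈ P) :
    b ≠ [] ∧ b.Nodup ∧ (∀ x ∈ b, 1 ≤ x ∧ x ≤ N) := by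
  refine ⟨(hP.1 b hb).1, (hP.1 b hb).2, fun x hx => ?_⟩
  have := (hP.2.2 x).mp ⟨b, hb, hx⟩
  rw [Finset.mem_Icc] at this
  exact this

lemma phi_maps_to {i : ℕ} {P : Finset (List ℕ)}
    (hi : i ∈ Finset.Icc 1 (n-1)) (hP : P ∈ lahSet ((ℓ : ℤ) - 1) (n-1) m) :
    P.image (shiftIns i) ∈ lahSet (ℓ : ℤ) n m := by
  classical
  obtain ⟨hop, hcard, hw⟩ := hP
  rw [Finset.mem_Icc] at hi
  have hfacts := fun {b} (hb : b ∈ P) => part_mem_facts hop hb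
  have h1b : ∀ b ∈ P, ∀ x ∈ b, 1 ≤ x := fun b hb x hx => ((hfacts hb).2.2 x hx).1
  have hrec : ∀ b ∈ P, ((shiftIns i b).erase 1).map (· - 1) = b :=
    fun b hb => recover_shiftIns (hfacts hb).2.1 (h1b b hb)
  have hinj : Set.InjOn (shiftIns i) ↑P := by
    intro b hb b' hb' heq
    rw [← hrec b hb, heq, hrec b' hb']
  -- the unique block containing i
  obtain ⟨b₀, hb₀, hib₀⟩ := (hop.2.2 i).mpr (Finset.mem_Icc.mpr ⟨hi.1, hi.2⟩)
  refine ⟨⟨?_, ?_, ?_⟩, ?_, ?_⟩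
  · intro c hc
    obtain ⟨b, hb, rfl⟩ := Finset.mem_image.mp hc
    exact ⟨shiftIns_ne_nil (hfacts hb).1,
      nodup_shiftIns (hfacts hb).2.1 (h1b b hb) hi.1⟩
  · intro c₁ hc₁ c₂ hc₂ hne x hx₁ hx₂
    obtain ⟨b₁, hb₁, rfl⟩ := Finset.mem_image.mp hc₁
    obtain ⟨b₂, hb₂, rfl⟩ := Finset.mem_image.mp hc₂
    have hbne : b₁ ≠ b₂ := fun h => hne (by rw [h])
    rcases mem_shiftIns.mp hx₁ with ⟨rfl, hi₁⟩ | ⟨z₁, hz₁, rfl⟩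
    · rcases mem_shiftIns.mp hx₂ with ⟨_, hi₂⟩ | ⟨z₂, hz₂, hz⟩
      · exact hop.2.1 b₁ hb₁ b₂ hb₂ hbne i hi₁ hi₂
      · have := h1b b₂ hb₂ z₂ hz₂; omega
    · rcases mem_shiftIns.mp hx₂ with ⟨h1, _⟩ | ⟨z₂, hz₂, hz⟩
      · have := h1b b₁ hb₁ z₁ hz₁; omega
      · have : z₁ = z₂ := by omega
        subst this
        exact hop.2.1 b₁ hb₁ b₂ hb₂ hbne z₁ hz₁ hz₂
  · intro x
    constructor
    · rintro ⟨c, hc, hx⟩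
      obtain ⟨b, hb, rfl⟩ := Finset.mem_image.mp hc
      rw [Finset.mem_Icc]
      rcases mem_shiftIns.mp hx with ⟨rfl, _⟩ | ⟨z, hz, rfl⟩
      · omega
      · have := (hfacts hb).2.2 z hz
        omega
    · intro hx
      rw [Finset.mem_Icc] at hx
      by_cases hx1 : x = 1
      · subst hx1
        exact ⟨shiftIns i b₀, Finset.mem_image_of_mem _ hb₀,
          mem_shiftIns.mpr (Or.inl ⟨rfl, hib₀⟩)⟩
      · have : x - 1 ∈ Finset.Icc 1 (n-1) := Finset.mem_Icc.mpr (by omega)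
        obtain ⟨b, hb, hxb⟩ := (hop.2.2 (x-1)).mpr this
        refine ⟨shiftIns i b, Finset.mem_image_of_mem _ hb,
          mem_shiftIns.mpr (Or.inr ⟨x - 1, hxb, by omega⟩)⟩
  · rw [Finset.card_image_of_injOn hinj, hcard]
  · have hsum : partitionWeight (P.image (shiftIns i)) =
        ∑ b ∈ P, blockWeight (shiftIns i b) := by
      unfold partitionWeight
      exact Finset.sum_image (fun x hx y hy h => hinj hx hy h)
    rw [hsum]
    have : ∀ b ∈ P, blockWeight (shiftIns i b)
        = blockWeight b + (if i ∈ b then 1 else 0) := fun b hb =>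
      blockWeight_shiftIns (hfacts hb).1 (hfacts hb).2.1 (h1b b hb)
    rw [Finset.sum_congr rfl this, Finset.sum_add_distrib, Finset.sum_boole]
    have hfilt : P.filter (fun b => i ∈ b) = {b₀} := by
      rw [Finset.eq_singleton_iff_unique_mem]
      refine ⟨Finset.mem_filter.mpr ⟨hb₀, hib₀⟩, fun b hb => ?_⟩
      rw [Finset.mem_filter] at hb
      by_contra hne
      exact hop.2.1 b hb.1 b₀ hb₀ hne i hb.2 hib₀
    rw [hfilt, Finset.card_singleton]
    unfold partitionWeight at hw
    push_cast at hw ⊢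
    linarith

lemma phi_injOn :
    Set.InjOn (fun p : ℕ × Finset (List ℕ) => p.2.image (shiftIns p.1))
      ((↑(Finset.Icc 1 (n-1)) : Set ℕ) ×ˢ lahSet ((ℓ : ℤ) - 1) (n-1) m) := by
  classical
  rintro ⟨i, P⟩ hiP ⟨i', P'⟩ hiP' heq
  simp only [Set.mem_prod, Finset.mem_coe, Finset.mem_Icc] at hiP hiP'
  obtain ⟨hi, hP⟩ := hiP
  obtain ⟨hi', hP'⟩ := hiP'
  obtain ⟨hop, hcard, hw⟩ := hP
  obtain ⟨hop', hcard', hw'⟩ := hP'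
  simp only at heq
  have hfacts := fun {b} (hb : b ∈ P) => part_mem_facts hop hb
  have hfacts' := fun {b} (hb : b ∈ P') => part_mem_facts hop' hb
  have hrec : ∀ (j : ℕ) (Q : Finset (List ℕ)), IsOrderedPartition (n-1) Q →
      (Q.image (shiftIns j)).image (fun c => (c.erase 1).map (· - 1)) = Q := by
    intro j Q hQ
    rw [Finset.image_image]
    have : ∀ b ∈ Q, ((shiftIns j b).erase 1).map (· - 1) = b := fun b hb =>
      recover_shiftIns (part_mem_facts hQ hb).2.1
        (fun x hx => ((part_mem_facts hQ hb).2.2 x hx).1)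
    calc Q.image (fun b => ((shiftIns j b).erase 1).map (· - 1))
        = Q.image id := Finset.image_congr (fun b hb => this b hb)
      _ = Q := Finset.image_id
  have hPP' : P = P' := by
    rw [← hrec i P hop, heq, hrec i' P' hop']
  subst hPP'
  obtain ⟨b₀, hb₀, hib₀⟩ := (hop.2.2 i).mpr (Finset.mem_Icc.mpr hi)
  have hmem : shiftIns i b₀ ∈ P.image (shiftIns i') := by
    rw [← heq]; exact Finset.mem_image_of_mem _ hb₀
  obtain ⟨b₁, hb₁, hbeq⟩ := Finset.mem_image.mp hmem
  have h1mem : (1 : ℕ) ∈ shiftIns i' b₁ := by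
    rw [hbeq]; exact mem_shiftIns.mpr (Or.inl ⟨rfl, hib₀⟩)
  have hi'b₁ : i' ∈ b₁ := by
    rcases mem_shiftIns.mp h1mem with ⟨_, h⟩ | ⟨z, hz, hz1⟩
    · exact h
    · have := ((hfacts hb₁).2.2 z hz).1; omega
  have hb₀₁ : b₀ = b₁ := by
    have e1 := recover_shiftIns (hfacts hb₀).2.1
      (fun x hx => ((hfacts hb₀).2.2 x hx).1) (i := i)
    have e2 := recover_shiftIns (hfacts hb₁).2.1
      (fun x hx => ((hfacts hb₁).2.2 x hx).1) (i := i')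
    rw [hbeq, e1] at e2
    exact e2
  subst hb₀₁
  have : i = i' := shiftIns_inj_left (hfacts hb₀).2.1
    (fun x hx => ((hfacts hb₀).2.2 x hx).1) hib₀ hi'b₁ hbeq.symm
  simp [this]

end KeyMap

lemma headI_mem' {b : List ℕ} (hb : b ≠ []) : b.headI ∈ b := by
  cases b with
  | nil => exact absurd rfl hb
  | cons x t => exact List.mem_cons_self

lemma key_lt (ℓ n m : ℕ)
    (hQ : ∃ Q₀ ∈ lahSet (ℓ:ℤ) n m, ∃ c ∈ Q₀, c.headI = 1) :
    (n-1) * (lahSet ((ℓ:ℤ)-1) (n-1) m).ncard < (lahSet (ℓ:ℤ) n m).ncard := by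
  classical
  set T : Set (ℕ × Finset (List ℕ)) :=
    (↑(Finset.Icc 1 (n-1)) : Set ℕ) ×ˢ lahSet ((ℓ:ℤ)-1) (n-1) m with hT
  set Φ : ℕ × Finset (List ℕ) → Finset (List ℕ) :=
    fun p => p.2.image (shiftIns p.1) with hΦ
  have hicc : (Finset.Icc 1 (n-1)).card = n - 1 := by rw [Nat.card_Icc]; omega
  have hTcard : T.ncard = (n-1) * (lahSet ((ℓ:ℤ)-1) (n-1) m).ncard := by
    rw [hT, ← Nat.card_coe_set_eq, Nat.card_congr (Equiv.Set.prod _ _), Nat.card_prod,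
      Nat.card_coe_set_eq, Nat.card_coe_set_eq, Set.ncard_coe_finset, hicc]
  have hsub : Φ '' T ⊆ lahSet (ℓ:ℤ) n m := by
    rintro _ ⟨⟨i,P⟩, hp, rfl⟩
    obtain ⟨hi, hP⟩ := hp
    exact phi_maps_to (Finset.mem_coe.mp hi) hP
  have himg : (Φ '' T).ncard = T.ncard := Set.ncard_image_of_injOn phi_injOn
  obtain ⟨Q₀, hQ₀, c, hc, hhead⟩ := hQ
  have hQ₀ni : Q₀ ∉ Φ '' T := by
    rintro ⟨⟨i,P⟩, hp, heq⟩
    obtain ⟨hi, hP⟩ := hp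
    rw [← heq] at hc
    obtain ⟨b, hb, rfl⟩ := Finset.mem_image.mp hc
    have hbf := part_mem_facts hP.1 hb
    have h2 : (shiftIns i b).headI = b.headI + 1 := headI_shiftIns hbf.1
    have hb1 : 1 ≤ b.headI := (hbf.2.2 _ (headI_mem' hbf.1)).1
    have hhead' : (shiftIns i b).headI = 1 := hhead
    omega
  have hfin := lahSet_finite (ℓ:ℤ) n m
  have hss : Φ '' T ⊂ lahSet (ℓ:ℤ) n m :=
    (Set.ssubset_iff_of_subset hsub).mpr ⟨Q₀, hQ₀, hQ₀ni⟩
  calc (n-1) * (lahSet ((ℓ:ℤ)-1) (n-1) m).ncard = T.ncard := hTcard.symm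
    _ = (Φ '' T).ncard := himg.symm
    _ < (lahSet (ℓ:ℤ) n m).ncard := Set.ncard_lt_ncard hss hfin

lemma key_le (ℓ n m : ℕ) :
    (n-1) * (lahSet ((ℓ:ℤ)-1) (n-1) m).ncard ≤ (lahSet (ℓ:ℤ) n m).ncard := by
  classical
  set T : Set (ℕ × Finset (List ℕ)) :=
    (↑(Finset.Icc 1 (n-1)) : Set ℕ) ×ˢ lahSet ((ℓ:ℤ)-1) (n-1) m with hT
  set Φ : ℕ × Finset (List ℕ) → Finset (List ℕ) :=
    fun p => p.2.image (shiftIns p.1) with hΦ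
  have hicc : (Finset.Icc 1 (n-1)).card = n - 1 := by rw [Nat.card_Icc]; omega
  have hTcard : T.ncard = (n-1) * (lahSet ((ℓ:ℤ)-1) (n-1) m).ncard := by
    rw [hT, ← Nat.card_coe_set_eq, Nat.card_congr (Equiv.Set.prod _ _), Nat.card_prod,
      Nat.card_coe_set_eq, Nat.card_coe_set_eq, Set.ncard_coe_finset, hicc]
  have hsub : Φ '' T ⊆ lahSet (ℓ:ℤ) n m := by
    rintro _ ⟨⟨i,P⟩, hp, rfl⟩
    obtain ⟨hi, hP⟩ := hp
    exact phi_maps_to (Finset.mem_coe.mp hi) hP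
  have himg : (Φ '' T).ncard = T.ncard := Set.ncard_image_of_injOn phi_injOn
  have hfin := lahSet_finite (ℓ:ℤ) n m
  calc (n-1) * (lahSet ((ℓ:ℤ)-1) (n-1) m).ncard = T.ncard := hTcard.symm
    _ = (Φ '' T).ncard := himg.symm
    _ ≤ (lahSet (ℓ:ℤ) n m).ncard := Set.ncard_le_ncard hsub hfin

lemma blockWeight_singleton (j : ℕ) : blockWeight [j] = 0 := by
  simp [blockWeight]

lemma witness_exists (n m ℓ : ℕ) (hm2 : 2 ≤ m) (hmn : m ≤ n) (hℓ : ℓ + m ≤ n) :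
    ∃ Q₀ ∈ lahSet (ℓ:ℤ) n m, ∃ c ∈ Q₀, c.headI = 1 := by
  classical
  set B : List ℕ := (m+ℓ) :: (List.range' m ℓ ++ List.range' (m+ℓ+1) (n-m-ℓ)) with hB
  set Q₀ : Finset (List ℕ) :=
    (Finset.Icc 1 (m-1)).image (fun j => [j]) ∪ {B} with hQ₀
  have hmemB : ∀ x, x ∈ B ↔ m ≤ x ∧ x ≤ n := by
    intro x
    rw [hB]
    simp only [List.mem_cons, List.mem_append, List.mem_range'_1]
    omega
  have hndB : B.Nodup := by
    rw [hB, List.nodup_cons]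
    constructor
    · simp only [List.mem_append, List.mem_range'_1]
      omega
    · refine List.Nodup.append (List.nodup_range') (List.nodup_range') ?_
      intro x hx₁ hx₂
      rw [List.mem_range'_1] at hx₁ hx₂
      omega
  have hBne : B ≠ [] := by rw [hB]; exact List.cons_ne_nil _ _
  have hwB : blockWeight B = ℓ := by
    unfold blockWeight
    rw [hB]
    simp only [List.headI_cons, List.filter_cons, decide_eq_true_eq, Nat.lt_irrefl,
      if_false, List.filter_append]
    rw [List.filter_eq_self.mpr, List.filter_eq_nil_iff.mpr]
    · simp [List.length_range']
    · intro a ha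
      rw [List.mem_range'_1] at ha
      exact fun h => absurd (of_decide_eq_true h) (by omega)
    · intro a ha
      rw [List.mem_range'_1] at ha
      exact decide_eq_true (by omega)
  have hmemQ : ∀ c, c ∈ Q₀ ↔ (∃ j, 1 ≤ j ∧ j ≤ m - 1 ∧ c = [j]) ∨ c = B := by
    intro c
    rw [hQ₀]
    simp only [Finset.mem_union, Finset.mem_image, Finset.mem_singleton, Finset.mem_Icc]
    constructor
    · rintro (⟨j, ⟨hj1, hj2⟩, rfl⟩ | rfl)
      · exact Or.inl ⟨j, hj1, hj2, rfl⟩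
      · exact Or.inr rfl
    · rintro (⟨j, hj1, hj2, rfl⟩ | rfl)
      · exact Or.inl ⟨j, ⟨hj1, hj2⟩, rfl⟩
      · exact Or.inr rfl
  have hBnotimg : B ∉ (Finset.Icc 1 (m-1)).image (fun j => [j]) := by
    intro h
    obtain ⟨j, hj, hjeq⟩ := Finset.mem_image.mp h
    rw [Finset.mem_Icc] at hj
    simp only [hB, List.cons.injEq] at hjeq
    omega
  have hdisj : Disjoint ((Finset.Icc 1 (m-1)).image (fun j => [j])) ({B} : Finset (List ℕ)) :=
    Finset.disjoint_singleton_right.mpr hBnotimg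
  refine ⟨Q₀, ⟨⟨?_, ?_, ?_⟩, ?_, ?_⟩, [1], ?_, rfl⟩
  · intro c hc
    rcases (hmemQ c).mp hc with ⟨j, _, _, rfl⟩ | rfl
    · exact ⟨List.cons_ne_nil _ _, List.nodup_singleton _⟩
    · exact ⟨hBne, hndB⟩
  · intro c₁ hc₁ c₂ hc₂ hne x hx₁ hx₂
    rcases (hmemQ c₁).mp hc₁ with ⟨j₁, hj₁, hj₁', rfl⟩ | rfl <;>
      rcases (hmemQ c₂).mp hc₂ with ⟨j₂, hj₂, hj₂', rfl⟩ | rfl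
    · simp only [List.mem_singleton] at hx₁ hx₂
      subst hx₁; subst hx₂
      exact hne rfl
    · simp only [List.mem_singleton] at hx₁
      subst hx₁
      rw [hmemB x] at hx₂
      omega
    · simp only [List.mem_singleton] at hx₂
      subst hx₂
      rw [hmemB x] at hx₁
      omega
    · exact hne rfl
  · intro x
    constructor
    · rintro ⟨c, hc, hx⟩
      rw [Finset.mem_Icc]
      rcases (hmemQ c).mp hc with ⟨j, hj, hj', rfl⟩ | rfl
      · simp only [List.mem_singleton] at hx
        omega
      · rw [hmemB x] at hx
        omega
    · intro hx
      rw [Finset.mem_Icc] at hx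
      by_cases hxm : x ≤ m - 1
      · exact ⟨[x], (hmemQ [x]).mpr (Or.inl ⟨x, hx.1, hxm, rfl⟩), List.mem_singleton.mpr rfl⟩
      · exact ⟨B, (hmemQ B).mpr (Or.inr rfl), (hmemB x).mpr (by omega)⟩
  · rw [hQ₀, Finset.card_union_of_disjoint hdisj, Finset.card_singleton,
      Finset.card_image_of_injective _ (fun a b hab => by
        simpa using hab), Nat.card_Icc]
    omega
  · unfold partitionWeight
    rw [hQ₀, Finset.sum_union hdisj, Finset.sum_singleton, hwB]
    rw [Finset.sum_image (fun x hx y hy h => by simpa using h)]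
    simp only [blockWeight_singleton, Finset.sum_const_zero]
    simp
  · exact (hmemQ [1]).mpr (Or.inl ⟨1, le_refl 1, by omega, rfl⟩)

lemma getD_ofFn {m : ℕ} (g : Fin m → ℕ) {i : ℕ} (h : i < m) :
    (List.ofFn g).getD i 0 = g ⟨i, h⟩ := by
  rw [List.getD_eq_getElem _ _ (by simpa using h)]
  simp

def invo (m j : ℕ) (hjm : j < m) : Fin m → Fin m :=
  fun x => ⟨if (x : ℕ) ≤ j then j - x else x, by split <;> omega⟩

lemma invo_invo (m j : ℕ) (hjm : j < m) (x : Fin m) :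
    invo m j hjm (invo m j hjm x) = x := by
  apply Fin.ext
  show (if (if (x : ℕ) ≤ j then j - (x:ℕ) else (x:ℕ)) ≤ j
      then j - (if (x : ℕ) ≤ j then j - (x:ℕ) else (x:ℕ))
      else (if (x : ℕ) ≤ j then j - (x:ℕ) else (x:ℕ))) = (x : ℕ)
  split
  · split <;> omega
  · rfl

lemma eulerian_pos (m j : ℕ) (hm : 1 ≤ m) (hj : j ≤ m - 1) : 0 < eulerian m j := by
  classical
  have hjm : j < m := by omega
  set σ₀ : Equiv.Perm (Fin m) :=
    ⟨invo m j hjm, invo m j hjm, invo_invo m j hjm, invo_invo m j hjm⟩ with hσ₀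
  have hval : ∀ (i : ℕ) (h : i < m), (σ₀ ⟨i, h⟩ : ℕ) = if i ≤ j then j - i else i := by
    intro i h
    rw [hσ₀]
    rfl
  have hdc : descentCount m σ₀ = j := by
    unfold descentCount
    have hfilt : (Finset.range (m - 1)).filter (fun i =>
        ((List.ofFn (fun t => (σ₀ t : ℕ))).getD (i + 1) 0) <
          ((List.ofFn (fun t => (σ₀ t : ℕ))).getD i 0)) = Finset.range j := by
      ext i
      simp only [Finset.mem_filter, Finset.mem_range]
      constructor
      · rintro ⟨him, hlt⟩
        rw [getD_ofFn _ (by omega), getD_ofFn _ (by omega)] at hlt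
        rw [hval (i+1) (by omega), hval i (by omega)] at hlt
        by_contra hij
        split at hlt <;> split at hlt <;> omega
      · intro hij
        have him : i < m - 1 := by omega
        refine ⟨him, ?_⟩
        rw [getD_ofFn _ (by omega), getD_ofFn _ (by omega),
          hval (i+1) (by omega), hval i (by omega)]
        rw [if_pos (by omega), if_pos (by omega)]
        omega
    rw [hfilt, Finset.card_range]
  have : Nonempty {σ : Equiv.Perm (Fin m) // descentCount m σ = j} := ⟨⟨σ₀, hdc⟩⟩
  exact Nat.card_pos


lemma weightedLah_eq (ℓ : ℤ) (n m : ℕ) : weightedLah ℓ n m = (lahSet ℓ n m).ncard := rfl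

lemma weightedLah_neg_one (n m : ℕ) : weightedLah (-1) n m = 0 := by
  rw [weightedLah_eq]
  have : lahSet (-1) n m = ∅ := by
    ext P
    simp only [lahSet, Set.mem_setOf_eq, Set.mem_empty_iff_false, iff_false]
    rintro ⟨_, _, hw⟩
    omega
  rw [this, Set.ncard_empty]

lemma weightedLah_key_le (ℓ n m : ℕ) :
    (n-1) * weightedLah ((ℓ:ℤ)-1) (n-1) m ≤ weightedLah (ℓ:ℤ) n m := by
  rw [weightedLah_eq, weightedLah_eq]
  exact key_le ℓ n m

lemma weightedLah_key_lt (ℓ n m : ℕ) (hm2 : 2 ≤ m) (hmn : m ≤ n) (hℓ : ℓ + m ≤ n) :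
    (n-1) * weightedLah ((ℓ:ℤ)-1) (n-1) m < weightedLah (ℓ:ℤ) n m := by
  rw [weightedLah_eq, weightedLah_eq]
  exact key_lt ℓ n m (witness_exists n m ℓ hm2 hmn hℓ)

theorem eCoef_gt (k n m : ℕ) (hk : 1 < k) (hkn : k < n - 1)
    (hm : 1 ≤ m) (hmn : m ≤ n - 1) :
    eCoef (k - 1) (n - 1) m < eCoef k n m := by
  classical
  have hn4 : 4 ≤ n := by omega
  set N₁ : ℕ := ∑ ℓ ∈ Finset.range k,
    weightedLah (ℓ:ℤ) n (m + 1) * eulerian m (k - ℓ - 1) with hN₁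
  set N₂ : ℕ := ∑ ℓ ∈ Finset.range (k-1),
    weightedLah (ℓ:ℤ) (n-1) (m + 1) * eulerian m (k - 1 - ℓ - 1) with hN₂
  -- the key natural-number inequality
  have hkey : (n-1) * N₂ < N₁ := by
    set F : ℕ → ℕ := fun ℓ =>
      (n-1) * weightedLah ((ℓ:ℤ)-1) (n-1) (m+1) * eulerian m (k - ℓ - 1) with hF
    have hsplit : (n-1) * N₂ = ∑ ℓ ∈ Finset.range k, F ℓ := by
      have hk1 : k = (k-1) + 1 := by omega
      rw [hk1, Finset.sum_range_succ' F (k-1)]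
      have hF0 : F 0 = 0 := by
        rw [hF]
        simp only [Nat.cast_zero, zero_sub]
        rw [weightedLah_neg_one]
        simp
      rw [hF0, add_zero, hN₂, Finset.mul_sum]
      apply Finset.sum_congr rfl
      intro ℓ hℓ
      simp only [hF]
      have hcast : ((ℓ+1 : ℕ) : ℤ) - 1 = (ℓ : ℤ) := by push_cast; ring
      rw [hcast]
      have harg : k - 1 - ℓ - 1 = k - (ℓ + 1) - 1 := by omega
      rw [harg, Nat.mul_assoc]
    rw [hsplit]
    apply Finset.sum_lt_sum
    · intro ℓ hℓ
      simp only [hF]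
      exact Nat.mul_le_mul_right _ (weightedLah_key_le ℓ n (m+1))
    · refine ⟨k - min k m, Finset.mem_range.mpr (by omega), ?_⟩
      simp only [hF]
      have hA : 0 < eulerian m (k - (k - min k m) - 1) := by
        apply eulerian_pos m _ hm
        omega
      apply Nat.mul_lt_mul_of_lt_of_le _ (le_refl _) hA
      exact weightedLah_key_lt (k - min k m) n (m+1) (by omega) (by omega) (by omega)
  -- now transfer to ℚ
  have e1 : eCoef k n m = (N₁ : ℚ) / (n-1).factorial := by
    unfold eCoef
    rw [hN₁]
    push_cast
    ring
  have e2 : eCoef (k-1) (n-1) m = (N₂ : ℚ) / (n-2).factorial := by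
    unfold eCoef
    rw [hN₂]
    have : n - 1 - 1 = n - 2 := by omega
    rw [this]
    push_cast
    ring
  have hfact : (n-1).factorial = (n-1) * (n-2).factorial := by
    have h21 : n - 1 = (n-2) + 1 := by omega
    rw [h21, Nat.factorial_succ]
  rw [e1, e2, div_lt_div_iff₀ (by positivity) (by positivity)]
  have hcast : (((n-1) * N₂ : ℕ) : ℚ) < (N₁ : ℚ) := by exact_mod_cast hkey
  rw [hfact]
  push_cast at hcast ⊢
  have hfpos : (0:ℚ) < (n-2).factorial := by positivity
  nlinarith [hfpos, hcast]
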